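/- Consider a quitting game with nonempty set of normal players I_* = {1,…,n}. If the linear complementarity problem LCP((r̂^i)_{i=1}^n, 0) has a solution (w,z) with z_0 < 1, then for every ε > 0 the game admits a stationary ε-equilibrium. -/
import Mathlib


noncomputable section

/-- The probability that, under the behavior strategy profile `x`, the game terminates at
stage `t` (0-indexed) with quitting set `S`. -/
def termProb {N : ℕ} (x : Fin N → ℕ → ℝ) (t : ℕ) (S : Finset (Fin N)) : ℝ :=
  (∏ u ∈ Finset.range t, ∏ i : Fin N, (1 - x i u)) *
    ((∏ i ∈ S, x i t) * ∏ i ∈ Sᶜ, (1 - x i t))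

/-- The collection of nonempty subsets of players. -/
def nonempties (N : ℕ) : Finset (Finset (Fin N)) :=
  Finset.univ.filter fun S => S ≠ ∅

/-- The expected payoff of player `i` under the behavior strategy profile `x` in the
quitting game with payoffs `r`. -/
def payoff {N : ℕ} (r : Finset (Fin N) → Fin N → ℝ) (x : Fin N → ℕ → ℝ) (i : Fin N) : ℝ :=
  (∑' t : ℕ, ∑ S ∈ nonempties N, termProb x t S * r S i) +
    (1 - ∑' t : ℕ, ∑ S ∈ nonempties N, termProb x t S) * r ∅ i

/-- `x` is an `ε`-equilibrium: it is a valid profile and no player can gain more than `ε`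
by a unilateral deviation to any valid behavior strategy. -/
def IsEpsEquilibrium {N : ℕ} (r : Finset (Fin N) → Fin N → ℝ)
    (x : Fin N → ℕ → ℝ) (ε : ℝ) : Prop :=
  (∀ i t, x i t ∈ Set.Icc (0 : ℝ) 1) ∧
    ∀ (i : Fin N) (x' : ℕ → ℝ), (∀ t, x' t ∈ Set.Icc (0 : ℝ) 1) →
      payoff r x i ≥ payoff r (Function.update x i x') i - ε

/-- The decreasing sequence of sets of players `I_0 ⊇ I_1 ⊇ ⋯`:
`I_0 = I` and `I_{l+1} = {i ∈ I_l : ∃ j ∈ I_l, j ≠ i, r^j_i ≤ 0}`. -/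
def normalLevel {N : ℕ} (r : Finset (Fin N) → Fin N → ℝ) : ℕ → Set (Fin N)
  | 0 => Set.univ
  | l + 1 => {i | i ∈ normalLevel r l ∧ ∃ j ∈ normalLevel r l, j ≠ i ∧ r {j} i ≤ 0}

/-- The set `I_* = ∩_l I_l` of normal players. -/
def normalPlayers {N : ℕ} (r : Finset (Fin N) → Fin N → ℝ) : Set (Fin N) :=
  ⋂ l, normalLevel r l

/-- A solution `(w,z)` of the linear complementarity problem `LCP((r^i)_{i=1}^n, q)`,
where `r i` is the vector `r^i`: `w ∈ ℝ^n_{≥0}`, `z ∈ Δ({0,1,…,n})`,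
`w = z_0 q + ∑_i z_i r^i`, and `z_i = 0` or `w_i = 0` for every `i ∈ [n]`. -/
def IsLCPSolution (n : ℕ) (r : Fin n → Fin n → ℝ) (q w : Fin n → ℝ)
    (z : Fin (n + 1) → ℝ) : Prop :=
  (∀ i, 0 ≤ w i) ∧ (∀ i, 0 ≤ z i) ∧ (∑ i, z i = 1) ∧
    (∀ j, w j = z 0 * q j + ∑ i : Fin n, z i.succ * r i j) ∧
    (∀ i : Fin n, z i.succ = 0 ∨ w i = 0)

/-- The matrix with columns `r^1,…,r^n` is a `Q`-matrix if `LCP((r^i), q)` has a solution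
for every `q ∈ ℝ^n`. -/
def IsQMatrix (n : ℕ) (r : Fin n → Fin n → ℝ) : Prop :=
  ∀ q : Fin n → ℝ, ∃ (w : Fin n → ℝ) (z : Fin (n + 1) → ℝ), IsLCPSolution n r q w z


open Finset

namespace QG

variable {N : ℕ}

/-- one-stage probability of outcome set `S` -/
def stageP (a : Fin N → ℝ) (S : Finset (Fin N)) : ℝ :=
  (∏ k ∈ S, a k) * ∏ k ∈ Sᶜ, (1 - a k)

/-- one-stage expected payoff (conditional on termination coefficients) -/
def stageV (r : Finset (Fin N) → Fin N → ℝ) (i : Fin N) (a : Fin N → ℝ) : ℝ :=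
  ∑ S ∈ nonempties N, stageP a S * r S i

lemma weier {κ : Type*} (s : Finset κ) (f : κ → ℝ)
    (h0 : ∀ k ∈ s, 0 ≤ f k) (h1 : ∀ k ∈ s, f k ≤ 1) :
    1 - ∑ k ∈ s, f k ≤ ∏ k ∈ s, (1 - f k) := by
  classical
  induction s using Finset.induction with
  | empty => simp
  | @insert a s ha ih =>
    rw [Finset.sum_insert ha, Finset.prod_insert ha]
    have h0' : ∀ k ∈ s, 0 ≤ f k := fun k hk => h0 k (mem_insert_of_mem hk)
    have h1' : ∀ k ∈ s, f k ≤ 1 := fun k hk => h1 k (mem_insert_of_mem hk)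
    have ihs := ih h0' h1'
    have ha0 : 0 ≤ f a := h0 a (mem_insert_self a s)
    have ha1 : f a ≤ 1 := h1 a (mem_insert_self a s)
    have hs0 : 0 ≤ ∑ k ∈ s, f k := Finset.sum_nonneg h0'
    nlinarith [mul_le_mul_of_nonneg_left ihs (by linarith : (0:ℝ) ≤ 1 - f a)]

lemma stageP_nonneg {a : Fin N → ℝ} (ha : ∀ k, 0 ≤ a k ∧ a k ≤ 1) (S : Finset (Fin N)) :
    0 ≤ stageP a S := by
  apply mul_nonneg
  · exact Finset.prod_nonneg fun k _ => (ha k).1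
  · exact Finset.prod_nonneg fun k _ => by linarith [(ha k).2]

lemma sum_stageP (a : Fin N → ℝ) : ∑ S : Finset (Fin N), stageP a S = 1 := by
  classical
  have h := Finset.prod_add a (fun k => 1 - a k) Finset.univ
  simp only [add_sub_cancel, Finset.prod_const_one, Finset.powerset_univ] at h
  rw [show (1:ℝ) = ∑ S : Finset (Fin N), (∏ i ∈ S, a i) * ∏ i ∈ Finset.univ \ S, (1 - a i) from h]
  exact Finset.sum_congr rfl fun S _ => by rw [stageP, Finset.compl_eq_univ_sdiff]

lemma filter_not_ne_empty :
    (Finset.univ.filter fun S : Finset (Fin N) => ¬ S ≠ ∅) = {∅} := by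
  ext S; simp

lemma sum_stageP_ne (a : Fin N → ℝ) :
    ∑ S ∈ nonempties N, stageP a S = 1 - ∏ k, (1 - a k) := by
  classical
  have h := Finset.sum_filter_add_sum_filter_not Finset.univ
    (fun S : Finset (Fin N) => S ≠ ∅) (stageP a)
  rw [filter_not_ne_empty] at h
  have h2 : stageP a ∅ = ∏ k, (1 - a k) := by
    simp [stageP, Finset.compl_empty]
  have h3 := sum_stageP a
  rw [Finset.sum_singleton, h2] at h
  rw [h3] at h
  unfold nonempties
  linarith


lemma prod_one_sub_le_single {κ : Type*} (s : Finset κ) (f : κ → ℝ)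
    (h0 : ∀ k ∈ s, 0 ≤ f k) (h1 : ∀ k ∈ s, f k ≤ 1) {j : κ} (hj : j ∈ s) :
    ∏ k ∈ s, (1 - f k) ≤ 1 - f j := by
  classical
  rw [← Finset.mul_prod_erase s _ hj]
  have h2 : ∏ k ∈ s.erase j, (1 - f k) ≤ 1 := by
    apply Finset.prod_le_one
    · intro k hk; linarith [h1 k (Finset.mem_of_mem_erase hk)]
    · intro k hk; linarith [h0 k (Finset.mem_of_mem_erase hk)]
  have h3 : (0:ℝ) ≤ 1 - f j := by linarith [h1 j hj]
  nlinarith [Finset.prod_nonneg (fun k hk => by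
    linarith [h1 k (Finset.mem_of_mem_erase hk)] : ∀ k ∈ s.erase j, (0:ℝ) ≤ 1 - f k)]

lemma prod_one_sub_le_one {κ : Type*} (s : Finset κ) (f : κ → ℝ)
    (h0 : ∀ k ∈ s, 0 ≤ f k) (h1 : ∀ k ∈ s, f k ≤ 1) :
    ∏ k ∈ s, (1 - f k) ≤ 1 :=
  Finset.prod_le_one (fun k hk => by linarith [h1 k hk]) (fun k hk => by linarith [h0 k hk])

lemma prod_one_sub_nonneg {κ : Type*} (s : Finset κ) (f : κ → ℝ)
    (h1 : ∀ k ∈ s, f k ≤ 1) :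
    0 ≤ ∏ k ∈ s, (1 - f k) :=
  Finset.prod_nonneg fun k hk => by linarith [h1 k hk]

/-- affinity of `stageP` in the `i`-th coordinate -/
lemma stageP_update (y : Fin N → ℝ) (i : Fin N) (c : ℝ) (S : Finset (Fin N)) :
    stageP (Function.update y i c) S =
      c * stageP (Function.update y i 1) S + (1 - c) * stageP (Function.update y i 0) S := by
  classical
  by_cases hi : i ∈ S
  · have key : ∀ b : ℝ, stageP (Function.update y i b) S =
        b * ((∏ k ∈ S.erase i, y k) * ∏ k ∈ Sᶜ, (1 - y k)) := by
      intro b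
      rw [stageP, ← Finset.mul_prod_erase S _ hi, Function.update_self]
      have h1 : ∏ k ∈ S.erase i, Function.update y i b k = ∏ k ∈ S.erase i, y k :=
        Finset.prod_congr rfl fun k hk =>
          Function.update_of_ne (Finset.ne_of_mem_erase hk) _ _
      have h2 : ∏ k ∈ Sᶜ, (1 - Function.update y i b k) = ∏ k ∈ Sᶜ, (1 - y k) :=
        Finset.prod_congr rfl fun k hk => by
          rw [Function.update_of_ne (by
            intro h; subst h; exact (Finset.mem_compl.mp hk) hi) _ _]
      rw [h1, h2]; ring
    rw [key, key, key]; ring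
  · have hi' : i ∈ Sᶜ := Finset.mem_compl.mpr hi
    have key : ∀ b : ℝ, stageP (Function.update y i b) S =
        (1 - b) * ((∏ k ∈ S, y k) * ∏ k ∈ Sᶜ.erase i, (1 - y k)) := by
      intro b
      rw [stageP, ← Finset.mul_prod_erase Sᶜ _ hi', Function.update_self]
      have h1 : ∏ k ∈ S, Function.update y i b k = ∏ k ∈ S, y k :=
        Finset.prod_congr rfl fun k hk =>
          Function.update_of_ne (by intro h; subst h; exact hi hk) _ _
      have h2 : ∏ k ∈ Sᶜ.erase i, (1 - Function.update y i b k) =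
          ∏ k ∈ Sᶜ.erase i, (1 - y k) :=
        Finset.prod_congr rfl fun k hk => by
          rw [Function.update_of_ne (Finset.ne_of_mem_erase hk) _ _]
      rw [h1, h2]; ring
    rw [key, key, key]; ring

lemma stageV_update (r : Finset (Fin N) → Fin N → ℝ) (y : Fin N → ℝ) (i : Fin N) (c : ℝ) :
    stageV r i (Function.update y i c) =
      c * stageV r i (Function.update y i 1) + (1 - c) * stageV r i (Function.update y i 0) := by
  unfold stageV
  rw [Finset.mul_sum, Finset.mul_sum, ← Finset.sum_add_distrib]
  exact Finset.sum_congr rfl fun S _ => by rw [stageP_update]; ring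

lemma prod_update (y : Fin N → ℝ) (i : Fin N) (c : ℝ) :
    ∏ k, (1 - Function.update y i c k) = (1 - c) * ∏ k ∈ Finset.univ.erase i, (1 - y k) := by
  classical
  rw [← Finset.mul_prod_erase Finset.univ (fun k => 1 - Function.update y i c k)
    (Finset.mem_univ i), Function.update_self]
  congr 1
  exact Finset.prod_congr rfl fun k hk => by
    rw [Function.update_of_ne (Finset.ne_of_mem_erase hk)]


lemma singleton_mem_nonempties (i : Fin N) : ({i} : Finset (Fin N)) ∈ nonempties N := by
  simp [nonempties]

/-- bound on the value of quitting for sure -/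
lemma stageV_quit_bound (r : Finset (Fin N) → Fin N → ℝ) (hr : ∀ S j, |r S j| ≤ 1)
    (i : Fin N) (hdiag : r {i} i = 0) (y : Fin N → ℝ) (hy : ∀ k, 0 ≤ y k ∧ y k ≤ 1) :
    |QG.stageV r i (Function.update y i 1)| ≤
      1 - ∏ k ∈ Finset.univ.erase i, (1 - y k) := by
  classical
  set a := Function.update y i 1 with ha_def
  have ha : ∀ k, 0 ≤ a k ∧ a k ≤ 1 := by
    intro k
    by_cases hk : k = i
    · subst hk; simp [ha_def]
    · simp [ha_def, Function.update_of_ne hk]; exact ⟨(hy k).1, (hy k).2⟩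
  have hmem := singleton_mem_nonempties (N := N) i
  have hsplit : ∑ S ∈ (nonempties N).erase {i}, stageP a S * r S i + stageP a {i} * r {i} i
      = stageV r i a := Finset.sum_erase_add _ _ hmem
  have hQ : stageP a {i} = ∏ k ∈ Finset.univ.erase i, (1 - y k) := by
    rw [stageP, Finset.prod_singleton, ha_def, Function.update_self, one_mul,
      Finset.compl_singleton]
    exact Finset.prod_congr rfl fun k hk => by
      rw [Function.update_of_ne (Finset.ne_of_mem_erase hk)]
  have hprod0 : ∏ k, (1 - a k) = 0 := by
    rw [ha_def, prod_update]; ring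
  have hsum : ∑ S ∈ (nonempties N).erase {i}, stageP a S
      = 1 - ∏ k ∈ Finset.univ.erase i, (1 - y k) := by
    have := Finset.sum_erase_add (nonempties N) (stageP a) hmem
    rw [hQ] at this
    have h2 := sum_stageP_ne a
    rw [hprod0] at h2
    linarith
  have hbound : |∑ S ∈ (nonempties N).erase {i}, stageP a S * r S i|
      ≤ ∑ S ∈ (nonempties N).erase {i}, stageP a S := by
    refine (Finset.abs_sum_le_sum_abs _ _).trans (Finset.sum_le_sum fun S _ => ?_)
    rw [abs_mul, abs_of_nonneg (stageP_nonneg ha S)]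
    exact mul_le_of_le_one_right (stageP_nonneg ha S) (hr S i)
  calc |QG.stageV r i a| = |∑ S ∈ (nonempties N).erase {i}, stageP a S * r S i| := by
        rw [← hsplit, hdiag, mul_zero, add_zero]
    _ ≤ _ := hbound.trans_eq hsum

/-- second-order approximation of the one-stage value when nobody quits for sure -/
lemma stageV_approx (r : Finset (Fin N) → Fin N → ℝ) (hr : ∀ S j, |r S j| ≤ 1)
    (i : Fin N) (a : Fin N → ℝ) (ha : ∀ k, 0 ≤ a k ∧ a k ≤ 1) :
    |QG.stageV r i a - ∑ k, a k * r {k} i| ≤ 2 * (∑ k, a k) ^ 2 := by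
  classical
  set σ := ∑ k, a k with hσ_def
  have hσ0 : 0 ≤ σ := Finset.sum_nonneg fun k _ => (ha k).1
  set Pk : Fin N → ℝ := fun k => ∏ l ∈ ({k}ᶜ : Finset (Fin N)), (1 - a l) with hPk_def
  have hPk1 : ∀ k, Pk k ≤ 1 := fun k =>
    prod_one_sub_le_one _ _ (fun l _ => (ha l).1) (fun l _ => (ha l).2)
  have hPknn : ∀ k, 0 ≤ Pk k := fun k =>
    prod_one_sub_nonneg _ _ (fun l _ => (ha l).2)
  have hPk0 : ∀ k, 1 - σ ≤ Pk k := by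
    intro k
    have h1 := weier ({k}ᶜ : Finset (Fin N)) a (fun l _ => (ha l).1) (fun l _ => (ha l).2)
    have h2 : ∑ l ∈ ({k}ᶜ : Finset (Fin N)), a l ≤ σ :=
      Finset.sum_le_sum_of_subset_of_nonneg (Finset.subset_univ _)
        (fun l _ _ => (ha l).1)
    linarith
  have hsingP : ∀ k, stageP a {k} = a k * Pk k := fun k => by
    rw [stageP, Finset.prod_singleton]
  -- split the sum into singletons and the rest
  have hsplit := Finset.sum_filter_add_sum_filter_not (nonempties N)
    (fun S => S.card = 1) (fun S => stageP a S * r S i)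
  have himg : (nonempties N).filter (fun S => S.card = 1)
      = Finset.univ.image (fun k : Fin N => ({k} : Finset (Fin N))) := by
    ext S
    simp only [nonempties, Finset.mem_filter, Finset.mem_univ, true_and,
      Finset.mem_image, Finset.card_eq_one]
    constructor
    · rintro ⟨-, k, rfl⟩; exact ⟨k, rfl⟩
    · rintro ⟨k, rfl⟩; exact ⟨Finset.singleton_ne_empty k, k, rfl⟩
  have hinj : ∀ x ∈ (Finset.univ : Finset (Fin N)), ∀ y ∈ Finset.univ,
      ({x} : Finset (Fin N)) = {y} → x = y := fun x _ y _ h => Finset.singleton_injective h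
  have hSing : ∑ S ∈ (nonempties N).filter (fun S => S.card = 1), stageP a S * r S i
      = ∑ k, stageP a {k} * r {k} i := by rw [himg, Finset.sum_image hinj]
  have hSingp : ∑ S ∈ (nonempties N).filter (fun S => S.card = 1), stageP a S
      = ∑ k, stageP a {k} := by rw [himg, Finset.sum_image hinj]
  -- first error: singletons vs first-order term
  have herr1 : |∑ k, stageP a {k} * r {k} i - ∑ k, a k * r {k} i| ≤ σ * σ := by
    rw [← Finset.sum_sub_distrib]
    refine (Finset.abs_sum_le_sum_abs _ _).trans ?_
    have : ∀ k : Fin N, |stageP a {k} * r {k} i - a k * r {k} i| ≤ a k * σ := by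
      intro k
      rw [hsingP, show a k * Pk k * r {k} i - a k * r {k} i
        = a k * ((Pk k - 1) * r {k} i) from by ring, abs_mul, abs_of_nonneg (ha k).1,
        abs_mul]
      have h1 : |Pk k - 1| ≤ σ := by
        rw [abs_le]; constructor <;> [linarith [hPk0 k]; linarith [hPk1 k]]
      have habs : |Pk k - 1| * |r {k} i| ≤ σ * 1 :=
        mul_le_mul h1 (hr {k} i) (abs_nonneg _) hσ0
      have h2 := (ha k).1
      nlinarith
    refine (Finset.sum_le_sum fun k _ => this k).trans ?_
    rw [← Finset.sum_mul]
  -- second error: non-singleton sets have total probability ≤ σ²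
  have hrest : ∑ S ∈ (nonempties N).filter (fun S => ¬ S.card = 1), stageP a S ≤ σ * σ := by
    have h1 := Finset.sum_filter_add_sum_filter_not (nonempties N)
      (fun S => S.card = 1) (stageP a)
    rw [hSingp] at h1
    have h2 := sum_stageP_ne a
    have h3 : 1 - σ ≤ ∏ k, (1 - a k) :=
      weier _ _ (fun l _ => (ha l).1) (fun l _ => (ha l).2)
    have h4 : σ * (1 - σ) ≤ ∑ k, stageP a {k} := by
      rw [hσ_def, Finset.sum_mul]
      refine Finset.sum_le_sum fun k _ => ?_
      rw [hsingP]
      exact mul_le_mul_of_nonneg_left (hPk0 k) (ha k).1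
    nlinarith
  have herr2 : |∑ S ∈ (nonempties N).filter (fun S => ¬ S.card = 1), stageP a S * r S i|
      ≤ σ * σ := by
    refine ((Finset.abs_sum_le_sum_abs _ _).trans ?_).trans hrest
    refine Finset.sum_le_sum fun S _ => ?_
    rw [abs_mul, abs_of_nonneg (stageP_nonneg ha S)]
    exact mul_le_of_le_one_right (stageP_nonneg ha S) (hr S i)
  have : stageV r i a - ∑ k, a k * r {k} i
      = (∑ k, stageP a {k} * r {k} i - ∑ k, a k * r {k} i)
        + ∑ S ∈ (nonempties N).filter (fun S => ¬ S.card = 1), stageP a S * r S i := by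
    rw [stageV, ← hsplit, hSing]; ring
  rw [this]
  calc |_| ≤ _ := abs_add_le _ _
    _ ≤ σ * σ + σ * σ := add_le_add herr1 herr2
    _ = 2 * σ ^ 2 := by ring


/-! ### Analytic part -/

def QQ (y : Fin N → ℝ) (i : Fin N) : ℝ := ∏ k ∈ Finset.univ.erase i, (1 - y k)

def pit (Q : ℝ) (q : ℕ → ℝ) (t : ℕ) : ℝ := ∏ s ∈ Finset.range t, ((1 - q s) * Q)

lemma pit_zero (Q : ℝ) (q : ℕ → ℝ) : pit Q q 0 = 1 := by simp [pit]

lemma pit_succ (Q : ℝ) (q : ℕ → ℝ) (t : ℕ) :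
    pit Q q (t + 1) = pit Q q t * ((1 - q t) * Q) := Finset.prod_range_succ _ _

lemma QQ_nonneg {y : Fin N → ℝ} (hy : ∀ k, 0 ≤ y k ∧ y k ≤ 1) (i : Fin N) :
    0 ≤ QQ y i := prod_one_sub_nonneg _ _ fun k _ => (hy k).2

lemma QQ_le_one {y : Fin N → ℝ} (hy : ∀ k, 0 ≤ y k ∧ y k ≤ 1) (i : Fin N) :
    QQ y i ≤ 1 := prod_one_sub_le_one _ _ (fun k _ => (hy k).1) (fun k _ => (hy k).2)

lemma pit_nonneg {Q : ℝ} (hQ0 : 0 ≤ Q) {q : ℕ → ℝ} (hq : ∀ t, 0 ≤ q t ∧ q t ≤ 1)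
    (t : ℕ) : 0 ≤ pit Q q t :=
  Finset.prod_nonneg fun s _ => mul_nonneg (by linarith [(hq s).2]) hQ0

lemma pit_le_pow {Q : ℝ} (hQ0 : 0 ≤ Q) {q : ℕ → ℝ} (hq : ∀ t, 0 ≤ q t ∧ q t ≤ 1)
    (t : ℕ) : pit Q q t ≤ Q ^ t := by
  have h1 : pit Q q t ≤ ∏ _s ∈ Finset.range t, Q := by
    apply Finset.prod_le_prod
    · intro s _; exact mul_nonneg (by linarith [(hq s).2]) hQ0
    · intro s _; nlinarith [(hq s).1, (hq s).2]
  simpa using h1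

section profile

variable {r : Finset (Fin N) → Fin N → ℝ} {i : Fin N} {y : Fin N → ℝ} {q : ℕ → ℝ}
  {z : Fin N → ℕ → ℝ}

variable (hzi : ∀ t, z i t = q t) (hzj : ∀ j t, j ≠ i → z j t = y j)

include hzi hzj

lemma prod_z (t : ℕ) : ∏ k, (1 - z k t) = (1 - q t) * QQ y i := by
  classical
  rw [← Finset.mul_prod_erase Finset.univ (fun k => 1 - z k t) (Finset.mem_univ i), hzi]
  congr 1
  exact Finset.prod_congr rfl fun k hk => by rw [hzj k t (Finset.ne_of_mem_erase hk)]

lemma termProb_eq (t : ℕ) (S : Finset (Fin N)) :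
    termProb z t S = pit (QQ y i) q t * stageP (Function.update y i (q t)) S := by
  classical
  rw [termProb, stageP, pit]
  have h1 : ∏ u ∈ Finset.range t, ∏ k, (1 - z k u)
      = ∏ s ∈ Finset.range t, ((1 - q s) * QQ y i) :=
    Finset.prod_congr rfl fun u _ => prod_z hzi hzj u
  have h2 : ∀ k, z k t = Function.update y i (q t) k := by
    intro k
    by_cases hk : k = i
    · subst hk; rw [hzi, Function.update_self]
    · rw [hzj k t hk, Function.update_of_ne hk]
  rw [h1]
  congr 1
  rw [Finset.prod_congr rfl fun k _ => by rw [h2 k],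
    Finset.prod_congr rfl (fun k (_ : k ∈ Sᶜ) => by rw [h2 k])]

lemma sum_term_val (t : ℕ) :
    ∑ S ∈ nonempties N, termProb z t S * r S i
      = pit (QQ y i) q t * (q t * stageV r i (Function.update y i 1)
          + (1 - q t) * stageV r i (Function.update y i 0)) := by
  rw [← stageV_update]
  rw [show ∑ S ∈ nonempties N, termProb z t S * r S i
      = pit (QQ y i) q t * ∑ S ∈ nonempties N, stageP (Function.update y i (q t)) S * r S i from by
    rw [Finset.mul_sum]
    exact Finset.sum_congr rfl fun S _ => by rw [termProb_eq hzi hzj, mul_assoc]]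
  rfl

lemma sum_term_tot (t : ℕ) :
    ∑ S ∈ nonempties N, termProb z t S
      = pit (QQ y i) q t * (1 - (1 - q t) * QQ y i) := by
  rw [show ∑ S ∈ nonempties N, termProb z t S
      = pit (QQ y i) q t * ∑ S ∈ nonempties N, stageP (Function.update y i (q t)) S from by
    rw [Finset.mul_sum]
    exact Finset.sum_congr rfl fun S _ => by rw [termProb_eq hzi hzj]]
  rw [sum_stageP_ne, prod_update]
  rfl

end profile


section sums

variable {Q : ℝ} {q : ℕ → ℝ}

lemma hasSum_total (hQ0 : 0 ≤ Q) (hQ1 : Q < 1) (hq : ∀ t, 0 ≤ q t ∧ q t ≤ 1) :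
    HasSum (fun t => pit Q q t * (1 - (1 - q t) * Q)) 1 := by
  have hterm : ∀ t, pit Q q t * (1 - (1 - q t) * Q) = pit Q q t - pit Q q (t + 1) := by
    intro t; rw [pit_succ]; ring
  have hnn : ∀ t, 0 ≤ pit Q q t * (1 - (1 - q t) * Q) := by
    intro t
    apply mul_nonneg (pit_nonneg hQ0 hq t)
    nlinarith [(hq t).1, (hq t).2]
  have hpartial : ∀ T, ∑ t ∈ Finset.range T, pit Q q t * (1 - (1 - q t) * Q)
      = 1 - pit Q q T := by
    intro T
    rw [Finset.sum_congr rfl fun t _ => hterm t, Finset.sum_range_sub' (pit Q q) T, pit_zero]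
  have hsummable : Summable (fun t => pit Q q t * (1 - (1 - q t) * Q)) := by
    apply summable_of_sum_range_le (c := 1) hnn
    intro T; rw [hpartial]
    have := pit_nonneg hQ0 hq T; linarith
  have hlim : Filter.Tendsto
      (fun T => ∑ t ∈ Finset.range T, pit Q q t * (1 - (1 - q t) * Q))
      Filter.atTop (nhds 1) := by
    simp only [hpartial]
    have h0 : Filter.Tendsto (fun T => pit Q q T) Filter.atTop (nhds 0) :=
      squeeze_zero (pit_nonneg hQ0 hq) (pit_le_pow hQ0 hq)
        (tendsto_pow_atTop_nhds_zero_of_lt_one hQ0 hQ1)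
    have h1 := Filter.Tendsto.const_sub (1 : ℝ) h0
    simpa using h1
  have h2 := hsummable.hasSum.tendsto_sum_nat
  have heq := tendsto_nhds_unique h2 hlim
  have h3 := hsummable.hasSum
  rwa [heq] at h3

lemma summable_val (hQ0 : 0 ≤ Q) (hQ1 : Q < 1) (hq : ∀ t, 0 ≤ q t ∧ q t ≤ 1)
    (g : ℕ → ℝ) (M : ℝ) (hg : ∀ t, |g t| ≤ M) :
    Summable (fun t => pit Q q t * g t) := by
  apply Summable.of_abs
  have hsum : Summable (fun t : ℕ => Q ^ t * M) :=
    (summable_geometric_of_lt_one hQ0 hQ1).mul_right M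
  apply Summable.of_nonneg_of_le (fun t => abs_nonneg _) _ hsum
  intro t
  rw [abs_mul, abs_of_nonneg (pit_nonneg hQ0 hq t)]
  exact mul_le_mul (pit_le_pow hQ0 hq t) (hg t) (abs_nonneg _) (pow_nonneg hQ0 t)

lemma dev_bound (hQ0 : 0 ≤ Q) (hQ1 : Q < 1) (hq : ∀ t, 0 ≤ q t ∧ q t ≤ 1)
    (A C v' : ℝ) (hA : A ≤ v') (hC : C + Q * v' ≤ v') :
    ∑' t, pit Q q t * (q t * A + (1 - q t) * C) ≤ v' := by
  set g : ℕ → ℝ := fun t => q t * A + (1 - q t) * C with hg_def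
  have hgb : ∀ t, |g t| ≤ |A| + |C| := by
    intro t
    have h1 := (hq t).1; have h2 := (hq t).2
    calc |g t| ≤ |q t * A| + |(1 - q t) * C| := abs_add_le _ _
      _ = q t * |A| + (1 - q t) * |C| := by
          rw [abs_mul, abs_mul, abs_of_nonneg h1, abs_of_nonneg (by linarith : (0:ℝ) ≤ 1 - q t)]
      _ ≤ |A| + |C| := by nlinarith [abs_nonneg A, abs_nonneg C]
  have hsummable := summable_val hQ0 hQ1 hq g (|A| + |C|) hgb
  have hpartial : ∀ T, ∑ t ∈ Finset.range T, pit Q q t * g t ≤ v' - pit Q q T * v' := by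
    intro T
    induction T with
    | zero => simp [pit_zero]
    | succ T ih =>
      rw [Finset.sum_range_succ]
      have hgle : q T * A + (1 - q T) * C ≤ v' - (1 - q T) * Q * v' := by
        have h1 := (hq T).1; have h2 := (hq T).2
        have e1 : q T * A ≤ q T * v' := mul_le_mul_of_nonneg_left hA h1
        have e2 : (1 - q T) * (C + Q * v') ≤ (1 - q T) * v' :=
          mul_le_mul_of_nonneg_left hC (by linarith)
        nlinarith [e1, e2]
      have hstep : pit Q q T * g T ≤ pit Q q T * v' - pit Q q (T + 1) * v' := by
        rw [pit_succ]
        have hgT : g T = q T * A + (1 - q T) * C := rfl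
        rw [hgT]
        have h3 := mul_le_mul_of_nonneg_left hgle (pit_nonneg hQ0 hq T)
        nlinarith [h3]
      linarith
  have htends := hsummable.hasSum.tendsto_sum_nat
  have hub : ∀ T, ∑ t ∈ Finset.range T, pit Q q t * g t ≤ v' + Q ^ T * |v'| := by
    intro T
    have h1 := hpartial T
    have h2 : -(pit Q q T * v') ≤ Q ^ T * |v'| := by
      have h3 := pit_nonneg hQ0 hq T
      have h4 := pit_le_pow hQ0 hq T
      rcases le_or_gt 0 v' with h | h
      · rw [abs_of_nonneg h]; nlinarith
      · rw [abs_of_neg h]; nlinarith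
    linarith
  have hbtends : Filter.Tendsto (fun T : ℕ => v' + Q ^ T * |v'|) Filter.atTop (nhds v') := by
    have h0 := tendsto_pow_atTop_nhds_zero_of_lt_one hQ0 hQ1
    have h1 := (h0.mul_const |v'|).const_add v'
    simpa using h1
  exact le_of_tendsto_of_tendsto' htends hbtends hub

lemma stat_value (hQ0 : 0 ≤ Q) (hQ1 : Q < 1) (c g : ℝ) (hc0 : 0 ≤ c) (hc1 : c ≤ 1) :
    ∑' t, pit Q (fun _ => c) t * g = g / (1 - (1 - c) * Q) := by
  have hρ0 : 0 ≤ (1 - c) * Q := mul_nonneg (by linarith) hQ0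
  have hρ1 : (1 - c) * Q < 1 := by nlinarith
  have hpit : ∀ t, pit Q (fun _ : ℕ => c) t = ((1 - c) * Q) ^ t := by
    intro t; rw [pit, Finset.prod_const, Finset.card_range]
  rw [tsum_congr (fun t => by rw [hpit t]), tsum_mul_right,
    tsum_geometric_of_lt_one hρ0 hρ1, div_eq_mul_inv, mul_comm]

end sums


section payoffsec

variable {r : Finset (Fin N) → Fin N → ℝ} {i : Fin N} {y : Fin N → ℝ} {q : ℕ → ℝ}
  {z : Fin N → ℕ → ℝ}

lemma payoff_formula (hy : ∀ k, 0 ≤ y k ∧ y k ≤ 1) (hq : ∀ t, 0 ≤ q t ∧ q t ≤ 1)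
    (hzi : ∀ t, z i t = q t) (hzj : ∀ j t, j ≠ i → z j t = y j) (hQ1 : QQ y i < 1) :
    payoff r z i = ∑' t, pit (QQ y i) q t *
      (q t * stageV r i (Function.update y i 1)
        + (1 - q t) * stageV r i (Function.update y i 0)) := by
  have hQ0 : 0 ≤ QQ y i := QQ_nonneg hy i
  have h1 : (∑' t : ℕ, ∑ S ∈ nonempties N, termProb z t S * r S i)
      = ∑' t, pit (QQ y i) q t *
        (q t * stageV r i (Function.update y i 1)
          + (1 - q t) * stageV r i (Function.update y i 0)) :=
    tsum_congr fun t => sum_term_val hzi hzj t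
  have h2 : (∑' t : ℕ, ∑ S ∈ nonempties N, termProb z t S) = 1 := by
    rw [tsum_congr fun t => sum_term_tot hzi hzj t]
    exact (hasSum_total hQ0 hQ1 hq).tsum_eq
  rw [payoff, h1, h2]
  simp

end payoffsec

/-- The master lemma: a stationary profile is an `ε`-equilibrium provided
the one-shot quitting value and the waiting value are no more than `v i + ε`. -/
lemma master (r : Finset (Fin N) → Fin N → ℝ) (hr : ∀ S j, |r S j| ≤ 1)
    (ε : ℝ) (hε : 0 < ε) (y : Fin N → ℝ) (hy : ∀ k, 0 ≤ y k ∧ y k ≤ 1)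
    (hQ : ∀ i, QQ y i < 1)
    (hM2 : ∀ i, stageV r i (Function.update y i 1) * (1 - (1 - y i) * QQ y i)
      ≤ (y i * stageV r i (Function.update y i 1)
          + (1 - y i) * stageV r i (Function.update y i 0))
        + ε * (1 - (1 - y i) * QQ y i))
    (hM3 : ∀ i, stageV r i (Function.update y i 0) * (1 - (1 - y i) * QQ y i)
      ≤ (1 - QQ y i) * (y i * stageV r i (Function.update y i 1)
          + (1 - y i) * stageV r i (Function.update y i 0))
        + (1 - QQ y i) * ε * (1 - (1 - y i) * QQ y i)) :
    IsEpsEquilibrium r (fun j _ => y j) ε := by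
  constructor
  · exact fun j t => ⟨(hy j).1, (hy j).2⟩
  intro i x' hx'
  have hx'' : ∀ t, 0 ≤ x' t ∧ x' t ≤ 1 := fun t => ⟨(hx' t).1, (hx' t).2⟩
  set A := QG.stageV r i (Function.update y i 1) with hA_def
  set C := QG.stageV r i (Function.update y i 0) with hC_def
  set Q := QQ y i with hQ_def
  have hQ0 : 0 ≤ Q := QQ_nonneg hy i
  have hQ1 : Q < 1 := hQ i
  have hyi0 := (hy i).1
  have hyi1 := (hy i).2
  set den := 1 - (1 - y i) * Q with hden_def
  have hden : 0 < den := by nlinarith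
  set num := y i * A + (1 - y i) * C with hnum_def
  have hqconst : ∀ t : ℕ, 0 ≤ (fun _ : ℕ => y i) t ∧ (fun _ : ℕ => y i) t ≤ 1 :=
    fun _ => ⟨hyi0, hyi1⟩
  -- value of the stationary profile
  have hpay : payoff r (fun j _ => y j) i = num / den := by
    rw [payoff_formula hy hqconst (z := fun j _ => y j) (fun t => rfl)
      (fun j t hj => rfl) hQ1]
    have hsv := stat_value (Q := Q) hQ0 hQ1 (y i) num hyi0 hyi1
    rw [← hsv]
  -- bound on any deviation
  have hdev : payoff r (Function.update (fun j _ => y j) i x') i ≤ num / den + ε := by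
    rw [payoff_formula hy hx''
      (z := Function.update (fun j _ => y j) i x')
      (fun t => by rw [Function.update_self])
      (fun j t hj => by rw [Function.update_of_ne hj]) hQ1]
    apply dev_bound hQ0 hQ1 hx''
    · -- quitting value
      have hm := hM2 i
      rw [← hA_def, ← hC_def, ← hQ_def, ← hden_def, ← hnum_def] at hm
      have h : A - ε ≤ num / den := by
        rw [le_div_iff₀ hden]
        nlinarith [hm]
      linarith
    · -- waiting value
      have hm := hM3 i
      rw [← hA_def, ← hC_def, ← hQ_def, ← hden_def, ← hnum_def] at hm
      have h : C - (1 - Q) * ε ≤ ((1 - Q) * num) / den := by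
        rw [le_div_iff₀ hden]
        nlinarith [hm]
      have h4 : ((1 - Q) * num) / den = (1 - Q) * (num / den) := mul_div_assoc _ _ _
      rw [h4] at h
      nlinarith [h]
  rw [ge_iff_le, hpay]
  linarith [hdev]


/-! ### small helper sums -/

lemma sum_update_zero (y : Fin N → ℝ) (i : Fin N) :
    ∑ k, Function.update y i 0 k = ∑ k ∈ Finset.univ.erase i, y k := by
  classical
  rw [Finset.sum_update_of_mem (Finset.mem_univ i), zero_add, ← Finset.erase_eq]

lemma sum_update_zero_mul (y : Fin N → ℝ) (i : Fin N) (g : Fin N → ℝ) :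
    ∑ k, Function.update y i 0 k * g k = ∑ k ∈ Finset.univ.erase i, y k * g k := by
  classical
  rw [← Finset.sum_erase_add Finset.univ _ (Finset.mem_univ i), Function.update_self,
    zero_mul, add_zero]
  exact Finset.sum_congr rfl fun k hk => by
    rw [Function.update_of_ne (Finset.ne_of_mem_erase hk)]

lemma update_mem (y : Fin N → ℝ) (hy : ∀ k, 0 ≤ y k ∧ y k ≤ 1) (i : Fin N)
    {c : ℝ} (hc0 : 0 ≤ c) (hc1 : c ≤ 1) :
    ∀ k, 0 ≤ Function.update y i c k ∧ Function.update y i c k ≤ 1 := by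
  intro k
  by_cases hk : k = i
  · subst hk; rw [Function.update_self]; exact ⟨hc0, hc1⟩
  · rw [Function.update_of_ne hk]; exact hy k

lemma d_le_sigma {y : Fin N → ℝ} (hy : ∀ k, 0 ≤ y k ∧ y k ≤ 1) (i : Fin N) :
    1 - QQ y i ≤ ∑ k ∈ Finset.univ.erase i, y k := by
  have := weier (Finset.univ.erase i) y (fun k _ => (hy k).1) (fun k _ => (hy k).2)
  rw [QQ]; linarith

lemma single_le_d {y : Fin N → ℝ} (hy : ∀ k, 0 ≤ y k ∧ y k ≤ 1) {i j : Fin N}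
    (hij : j ≠ i) : y j ≤ 1 - QQ y i := by
  have := prod_one_sub_le_single (Finset.univ.erase i) y (fun k _ => (hy k).1)
    (fun k _ => (hy k).2) (Finset.mem_erase.mpr ⟨hij, Finset.mem_univ j⟩)
  rw [QQ]; linarith

/-! ### normal players structure -/

variable {r : Finset (Fin N) → Fin N → ℝ}

lemma normalLevel_antitone : Antitone (normalLevel r) :=
  antitone_nat_of_succ_le fun _ _ hi => hi.1

lemma normalPlayers_eq_level :
    ∃ L, normalPlayers r = normalLevel r L ∧ normalLevel r (L + 1) = normalLevel r L := by
  classical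
  set s : Set ℕ := Set.range (fun l => (normalLevel r l).ncard) with hs
  have hne : s.Nonempty := ⟨(normalLevel r 0).ncard, ⟨0, rfl⟩⟩
  obtain ⟨L, hL⟩ := Nat.sInf_mem hne
  have hmin : ∀ m, sInf s ≤ (normalLevel r m).ncard := fun m => Nat.sInf_le ⟨m, rfl⟩
  have hstab : ∀ m, L ≤ m → normalLevel r m = normalLevel r L := by
    intro m hm
    apply Set.eq_of_subset_of_ncard_le (normalLevel_antitone hm)
    have hL' : (normalLevel r L).ncard = sInf s := hL
    rw [hL']
    exact hmin m
  refine ⟨L, ?_, hstab (L + 1) (Nat.le_succ L)⟩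
  apply Set.Subset.antisymm
  · exact Set.iInter_subset _ L
  · intro x hx
    apply Set.mem_iInter.mpr
    intro l
    rcases le_total l L with h | h
    · exact normalLevel_antitone h hx
    · rw [hstab l h]; exact hx

lemma exists_punisher {i : Fin N} (hi : i ∈ normalPlayers r) :
    ∃ j, j ∈ normalPlayers r ∧ j ≠ i ∧ r {j} i ≤ 0 := by
  obtain ⟨L, hPL, hstab⟩ := normalPlayers_eq_level (r := r)
  have hi' : i ∈ normalLevel r (L + 1) := by rw [hstab, ← hPL]; exact hi
  obtain ⟨-, j, hj, hne, hrle⟩ := hi'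
  exact ⟨j, by rw [hPL]; exact hj, hne, hrle⟩

lemma nonnormal_pos {i : Fin N} (hi : i ∉ normalPlayers r) {j : Fin N}
    (hj : j ∈ normalPlayers r) (hne : j ≠ i) : 0 < r {j} i := by
  classical
  have hex : ∃ l, i ∉ normalLevel r l := by
    by_contra h; push_neg at h; exact hi (Set.mem_iInter.mpr h)
  have hl0 : Nat.find hex ≠ 0 := by
    intro h
    have := Nat.find_spec hex
    rw [h] at this
    exact this (by simp [normalLevel])
  obtain ⟨m, hm⟩ := Nat.exists_eq_succ_of_ne_zero hl0
  have hnotin : i ∉ normalLevel r (m + 1) := by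
    have h := Nat.find_spec hex
    rw [hm] at h
    exact h
  have him : i ∈ normalLevel r m := by
    by_contra h
    have := Nat.find_min hex (m := m) (by omega)
    exact this h
  simp only [normalLevel, Set.mem_setOf_eq] at hnotin
  push_neg at hnotin
  exact hnotin him j (Set.iInter_subset (fun l => normalLevel r l) m hj) hne

/-! ### transport between `Fin n` and `Fin N` -/

lemma sum_castLE {n : ℕ} (hnN : n ≤ N) (f : Fin N → ℝ)
    (hf : ∀ k : Fin N, ¬ (k : ℕ) < n → f k = 0) :
    ∑ k, f k = ∑ m : Fin n, f (Fin.castLE hnN m) := by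
  classical
  have h1 : ∑ k ∈ Finset.univ.image (Fin.castLE hnN), f k = ∑ k, f k := by
    apply Finset.sum_subset (Finset.subset_univ _)
    intro k _ hk
    apply hf
    intro hlt
    exact hk (Finset.mem_image.mpr ⟨⟨(k : ℕ), hlt⟩, Finset.mem_univ _, Fin.ext (by simp)⟩)
  rw [← h1, Finset.sum_image (fun x _ y _ h => Fin.castLE_injective hnN h)]


/-! ### pure arithmetic for case A -/

set_option maxHeartbeats 1000000 in
lemma caseA_M2 (A C Q yi δ μ E W : ℝ)
    (hd1 : δ * μ ≤ 1 - Q) (hd2 : 1 - Q ≤ δ)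
    (hA1 : -(1 - Q) ≤ A) (hA2 : A ≤ 1 - Q)
    (hC1 : δ * W - 2 * δ ^ 2 ≤ C)
    (hWnn : 0 ≤ W)
    (hyi0 : 0 ≤ yi) (hyiδ : yi ≤ δ)
    (hδ0 : 0 < δ) (hδhalf : δ ≤ 1 / 2) (hδE : δ ≤ E * μ ^ 2 / 12)
    (hμ0 : 0 < μ) (hμ1 : μ ≤ 1) (hE0 : 0 < E) (hE1 : E ≤ 1) (hQ0 : 0 ≤ Q) :
    A * (1 - (1 - yi) * Q) ≤ yi * A + (1 - yi) * C + E * (1 - (1 - yi) * Q) := by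
  have hdend : 1 - Q ≤ 1 - (1 - yi) * Q := by nlinarith
  have hden0 : 0 < 1 - (1 - yi) * Q := by nlinarith [mul_pos hδ0 hμ0]
  have hAδ : A ≤ δ := le_trans hA2 hd2
  have e1 : A * (1 - (1 - yi) * Q) ≤ δ * (1 - (1 - yi) * Q) :=
    mul_le_mul_of_nonneg_right hAδ hden0.le
  have e2 : -(δ ^ 2) ≤ yi * A := by nlinarith
  have hClb : -(2 * δ ^ 2) ≤ C := by nlinarith [mul_nonneg hδ0.le hWnn]
  have e3 : -(2 * δ ^ 2) ≤ (1 - yi) * C := by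
    rcases le_or_gt 0 C with h | h
    · nlinarith
    · nlinarith
  have e4 : E / 2 ≤ E - δ := by nlinarith
  have e5a : (E / 2) * (δ * μ) ≤ (E / 2) * (1 - (1 - yi) * Q) :=
    mul_le_mul_of_nonneg_left (le_trans hd1 hdend) (by positivity)
  have e5b : (E / 2) * (1 - (1 - yi) * Q) ≤ (E - δ) * (1 - (1 - yi) * Q) :=
    mul_le_mul_of_nonneg_right e4 hden0.le
  have e6 : 3 * δ ^ 2 ≤ (E / 2) * (δ * μ) := by
    nlinarith [mul_nonneg hμ0.le (by linarith : (0:ℝ) ≤ 1 - μ),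
      mul_le_mul_of_nonneg_left (show 12 * δ ≤ E * μ ^ 2 from by linarith) hδ0.le]
  have e5c : (E - δ) * (1 - (1 - yi) * Q) = E * (1 - (1 - yi) * Q) - δ * (1 - (1 - yi) * Q) := by
    ring
  linarith [e1, e2, e3, e5a, e5b, e6, e5c]

set_option maxHeartbeats 1000000 in
lemma caseA_M3 (A C Q yi δ μ E W : ℝ)
    (hd1 : δ * μ ≤ 1 - Q) (hd2 : 1 - Q ≤ δ)
    (hA1 : -(1 - Q) ≤ A) (hA2 : A ≤ 1 - Q)
    (hC2 : C ≤ δ * W + 2 * δ ^ 2)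
    (hyi0 : 0 ≤ yi) (hyiδ : yi ≤ δ)
    (hδ0 : 0 < δ) (hδhalf : δ ≤ 1 / 2) (hδE : δ ≤ E * μ ^ 2 / 12)
    (hμ0 : 0 < μ) (hμ1 : μ ≤ 1) (hE0 : 0 < E) (hE1 : E ≤ 1) (hQ0 : 0 ≤ Q)
    (hcase : yi = 0 ∨ W = 0) :
    C * (1 - (1 - yi) * Q) ≤ (1 - Q) * (yi * A + (1 - yi) * C)
      + (1 - Q) * E * (1 - (1 - yi) * Q) := by
  have hdend : 1 - Q ≤ 1 - (1 - yi) * Q := by nlinarith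
  have hden0 : 0 < 1 - (1 - yi) * Q := by nlinarith [mul_pos hδ0 hμ0]
  have hid : C * (1 - (1 - yi) * Q) - (1 - Q) * (yi * A + (1 - yi) * C)
      = yi * (C - (1 - Q) * A) := by ring
  rcases hcase with hyi | hWz
  · rw [hyi] at hid ⊢
    nlinarith [mul_nonneg hE0.le (sq_nonneg (1 - Q)),
      mul_pos (show (0:ℝ) < 1 - Q from by nlinarith [mul_pos hδ0 hμ0]) hE0]
  · rw [hWz] at hC2
    have hCub : C ≤ 2 * δ ^ 2 := by nlinarith
    have hexpr : C - (1 - Q) * A ≤ 3 * δ ^ 2 := by nlinarith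
    have h1 : yi * (C - (1 - Q) * A) ≤ δ * (3 * δ ^ 2) := by
      rcases le_or_gt 0 (C - (1 - Q) * A) with h | h
      · nlinarith
      · nlinarith [mul_pos hδ0 (mul_pos hδ0 hδ0)]
    have h2 : δ * (3 * δ ^ 2) ≤ (1 - Q) * E * (1 - (1 - yi) * Q) := by
      have s1 : E * (δ * μ) ≤ E * (1 - (1 - yi) * Q) :=
        mul_le_mul_of_nonneg_left (le_trans hd1 hdend) hE0.le
      have s2 : (δ * μ) * (E * (δ * μ)) ≤ (1 - Q) * (E * (1 - (1 - yi) * Q)) :=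
        mul_le_mul hd1 s1 (by positivity) (by linarith)
      have s3 : δ * (3 * δ ^ 2) ≤ (δ * μ) * (E * (δ * μ)) := by
        nlinarith [mul_le_mul_of_nonneg_left
          (show 12 * δ ≤ E * μ ^ 2 from by linarith) (sq_nonneg δ)]
      calc δ * (3 * δ ^ 2) ≤ (δ * μ) * (E * (δ * μ)) := s3
        _ ≤ (1 - Q) * (E * (1 - (1 - yi) * Q)) := s2
        _ = (1 - Q) * E * (1 - (1 - yi) * Q) := by ring
    linarith [hid, h1, h2]


/-! ### pure arithmetic for case B -/

set_option maxHeartbeats 1000000 in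
lemma caseB_j0_M2 (A C Q E β η yi σ rk : ℝ)
    (hE0 : 0 < E) (hE1 : E ≤ 1) (hβ : β = E / 32) (hη : η = E * β / 8)
    (hyi : yi = β) (hσ : σ = η) (hQ0 : 0 ≤ Q)
    (hd1 : η ≤ 1 - Q) (hd2 : 1 - Q ≤ σ)
    (hA1 : -(1 - Q) ≤ A) (hA2 : A ≤ 1 - Q)
    (hC1 : -(2 * σ ^ 2) ≤ C - η * rk) (hC2 : C - η * rk ≤ 2 * σ ^ 2)
    (hrk1 : -1 ≤ rk) (hrk0 : rk ≤ 0) :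
    A * (1 - (1 - yi) * Q) ≤ yi * A + (1 - yi) * C + E * (1 - (1 - yi) * Q) := by
  rw [hyi]
  rw [hσ] at hC1 hC2 hd2
  have hβ0 : 0 < β := by rw [hβ]; positivity
  have hE32 : E = 32 * β := by rw [hβ]; ring
  have hβ32 : β ≤ 1 / 32 := by rw [hβ]; linarith
  have hη4 : η = 4 * β ^ 2 := by rw [hη, hE32]; ring
  have hη0 : 0 < η := by nlinarith
  have hηβ : η ≤ β := by nlinarith
  have hden_lb : β ≤ 1 - (1 - β) * Q := by nlinarith
  have hden_ub : 1 - (1 - β) * Q ≤ 1 := by nlinarith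
  have hden0 : 0 < 1 - (1 - β) * Q := by linarith
  have hAub : A ≤ η := by linarith
  have hAlb : -η ≤ A := by linarith
  have e1 : A * (1 - (1 - β) * Q) ≤ η := by
    nlinarith [mul_le_mul_of_nonneg_right hAub hden0.le]
  have hCub : C ≤ 2 * η ^ 2 := by
    nlinarith [mul_nonneg hη0.le (neg_nonneg.mpr hrk0)]
  have hClb : -η - 2 * η ^ 2 ≤ C := by
    nlinarith [mul_nonneg hη0.le (by linarith : (0:ℝ) ≤ rk + 1)]
  have h1 : -η ≤ β * A := by
    nlinarith [mul_nonneg hβ0.le (by linarith : (0:ℝ) ≤ A + η),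
      mul_nonneg hη0.le (by linarith : (0:ℝ) ≤ 1 - β)]
  have h2 : -(2 * η) ≤ (1 - β) * C := by
    rcases le_or_gt 0 C with h | h
    · nlinarith
    · nlinarith
  have e3 : 8 * η ≤ E * (1 - (1 - β) * Q) := by
    have s1 : E * β ≤ E * (1 - (1 - β) * Q) := mul_le_mul_of_nonneg_left hden_lb hE0.le
    have s2 : E * β = 8 * η := by rw [hη]; ring
    linarith
  linarith [e1, h1, h2, e3]

set_option maxHeartbeats 1000000 in
lemma caseB_j0_M3 (A C Q E β η yi σ rk : ℝ)
    (hE0 : 0 < E) (hE1 : E ≤ 1) (hβ : β = E / 32) (hη : η = E * β / 8)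
    (hyi : yi = β) (hσ : σ = η) (hQ0 : 0 ≤ Q)
    (hd1 : η ≤ 1 - Q) (hd2 : 1 - Q ≤ σ)
    (hA1 : -(1 - Q) ≤ A) (hA2 : A ≤ 1 - Q)
    (hC1 : -(2 * σ ^ 2) ≤ C - η * rk) (hC2 : C - η * rk ≤ 2 * σ ^ 2)
    (hrk1 : -1 ≤ rk) (hrk0 : rk ≤ 0) :
    C * (1 - (1 - yi) * Q) ≤ (1 - Q) * (yi * A + (1 - yi) * C)
      + (1 - Q) * E * (1 - (1 - yi) * Q) := by
  rw [hyi]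
  rw [hσ] at hC1 hC2 hd2
  have hβ0 : 0 < β := by rw [hβ]; positivity
  have hE32 : E = 32 * β := by rw [hβ]; ring
  have hβ32 : β ≤ 1 / 32 := by rw [hβ]; linarith
  have hη4 : η = 4 * β ^ 2 := by rw [hη, hE32]; ring
  have hη0 : 0 < η := by nlinarith
  have hden_lb : β ≤ 1 - (1 - β) * Q := by nlinarith
  have hden0 : 0 < 1 - (1 - β) * Q := by linarith
  have hid : C * (1 - (1 - β) * Q) - (1 - Q) * (β * A + (1 - β) * C)
      = β * (C - (1 - Q) * A) := by ring
  have hCub : C ≤ 2 * η ^ 2 := by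
    nlinarith [mul_nonneg hη0.le (neg_nonneg.mpr hrk0)]
  have hdA : -(η ^ 2) ≤ (1 - Q) * A := by
    nlinarith [mul_le_mul_of_nonneg_left hA1 (by linarith : (0:ℝ) ≤ 1 - Q),
      mul_self_le_mul_self (by linarith : (0:ℝ) ≤ 1 - Q) hd2]
  have e1 : C - (1 - Q) * A ≤ 3 * η ^ 2 := by linarith
  have e2 : β * (C - (1 - Q) * A) ≤ β * (3 * η ^ 2) :=
    mul_le_mul_of_nonneg_left e1 hβ0.le
  have e3 : β * (3 * η ^ 2) ≤ 8 * η ^ 2 := by nlinarith [sq_nonneg η]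
  have e4 : 8 * η ^ 2 ≤ (1 - Q) * E * (1 - (1 - β) * Q) := by
    have s1 : E * β ≤ E * (1 - (1 - β) * Q) := mul_le_mul_of_nonneg_left hden_lb hE0.le
    have s2 : η * (E * β) ≤ (1 - Q) * (E * (1 - (1 - β) * Q)) :=
      mul_le_mul hd1 s1 (by positivity) (by linarith)
    have s3 : η * (E * β) = 8 * η ^ 2 := by rw [hη]; ring
    have s4 : (1 - Q) * (E * (1 - (1 - β) * Q)) = (1 - Q) * E * (1 - (1 - β) * Q) := by
      ring
    linarith
  linarith [hid, e2, e3, e4]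

set_option maxHeartbeats 1000000 in
lemma caseB_k1_M2 (A C Q E β η yi σ rj : ℝ)
    (hE0 : 0 < E) (hE1 : E ≤ 1) (hβ : β = E / 32) (hη : η = E * β / 8)
    (hyi : yi = η) (hσ : σ = β) (hQ0 : 0 ≤ Q)
    (hd1 : β ≤ 1 - Q) (hd2 : 1 - Q ≤ σ)
    (hA1 : -(1 - Q) ≤ A) (hA2 : A ≤ 1 - Q)
    (hC1 : -(2 * σ ^ 2) ≤ C - β * rj) (hC2 : C - β * rj ≤ 2 * σ ^ 2)
    (hrj0 : 0 ≤ rj) (hrj1 : rj ≤ 1) :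
    A * (1 - (1 - yi) * Q) ≤ yi * A + (1 - yi) * C + E * (1 - (1 - yi) * Q) := by
  rw [hyi]
  rw [hσ] at hC1 hC2 hd2
  have hβ0 : 0 < β := by rw [hβ]; positivity
  have hE32 : E = 32 * β := by rw [hβ]; ring
  have hβ32 : β ≤ 1 / 32 := by rw [hβ]; linarith
  have hη4 : η = 4 * β ^ 2 := by rw [hη, hE32]; ring
  have hη0 : 0 < η := by nlinarith
  have hηβ : η ≤ β := by nlinarith
  have hden_lb : β ≤ 1 - (1 - η) * Q := by nlinarith
  have hden_ub : 1 - (1 - η) * Q ≤ 1 := by nlinarith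
  have hden0 : 0 < 1 - (1 - η) * Q := by linarith
  have hAub : A ≤ β := by linarith
  have e1 : A * (1 - (1 - η) * Q) ≤ β * (1 - (1 - η) * Q) :=
    mul_le_mul_of_nonneg_right hAub hden0.le
  have hClb : -(2 * β ^ 2) ≤ C := by nlinarith [mul_nonneg hβ0.le hrj0]
  have h1 : -(η * β) ≤ η * A := by
    nlinarith [mul_nonneg hη0.le (by linarith : (0:ℝ) ≤ A + β)]
  have h2 : -(2 * β ^ 2) ≤ (1 - η) * C := by
    rcases le_or_gt 0 C with h | h
    · nlinarith
    · nlinarith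
  have s0 : E / 2 ≤ E - β := by rw [hβ]; linarith
  have s1 : (E / 2) * β ≤ (E / 2) * (1 - (1 - η) * Q) :=
    mul_le_mul_of_nonneg_left hden_lb (by positivity)
  have s2 : (E / 2) * (1 - (1 - η) * Q) ≤ (E - β) * (1 - (1 - η) * Q) :=
    mul_le_mul_of_nonneg_right s0 hden0.le
  have e4 : (E / 2) * β = 16 * β ^ 2 := by rw [hE32]; ring
  have e5 : η * β + 2 * β ^ 2 ≤ 16 * β ^ 2 := by nlinarith [sq_nonneg β]
  have ering : (E - β) * (1 - (1 - η) * Q)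
      = E * (1 - (1 - η) * Q) - β * (1 - (1 - η) * Q) := by ring
  linarith [e1, h1, h2, s1, s2, e4, e5, ering]

set_option maxHeartbeats 1000000 in
lemma caseB_k1_M3 (A C Q E β η yi σ rj : ℝ)
    (hE0 : 0 < E) (hE1 : E ≤ 1) (hβ : β = E / 32) (hη : η = E * β / 8)
    (hyi : yi = η) (hσ : σ = β) (hQ0 : 0 ≤ Q)
    (hd1 : β ≤ 1 - Q) (hd2 : 1 - Q ≤ σ)
    (hA1 : -(1 - Q) ≤ A) (hA2 : A ≤ 1 - Q)
    (hC1 : -(2 * σ ^ 2) ≤ C - β * rj) (hC2 : C - β * rj ≤ 2 * σ ^ 2)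
    (hrj0 : 0 ≤ rj) (hrj1 : rj ≤ 1) :
    C * (1 - (1 - yi) * Q) ≤ (1 - Q) * (yi * A + (1 - yi) * C)
      + (1 - Q) * E * (1 - (1 - yi) * Q) := by
  rw [hyi]
  rw [hσ] at hC1 hC2 hd2
  have hβ0 : 0 < β := by rw [hβ]; positivity
  have hE32 : E = 32 * β := by rw [hβ]; ring
  have hβ32 : β ≤ 1 / 32 := by rw [hβ]; linarith
  have hη4 : η = 4 * β ^ 2 := by rw [hη, hE32]; ring
  have hη0 : 0 < η := by nlinarith
  have hden_lb : β ≤ 1 - (1 - η) * Q := by nlinarith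
  have hden0 : 0 < 1 - (1 - η) * Q := by linarith
  have hid : C * (1 - (1 - η) * Q) - (1 - Q) * (η * A + (1 - η) * C)
      = η * (C - (1 - Q) * A) := by ring
  have hCub : C ≤ β + 2 * β ^ 2 := by nlinarith [mul_le_mul_of_nonneg_left hrj1 hβ0.le]
  have hdA : -(β ^ 2) ≤ (1 - Q) * A := by
    nlinarith [mul_le_mul_of_nonneg_left hA1 (by linarith : (0:ℝ) ≤ 1 - Q),
      mul_self_le_mul_self (by linarith : (0:ℝ) ≤ 1 - Q) hd2]
  have e1 : C - (1 - Q) * A ≤ β + 3 * β ^ 2 := by linarith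
  have e2 : η * (C - (1 - Q) * A) ≤ η * (β + 3 * β ^ 2) :=
    mul_le_mul_of_nonneg_left e1 hη0.le
  have e3 : η * (β + 3 * β ^ 2) ≤ 32 * β ^ 3 := by
    have h1 : η * (β + 3 * β ^ 2) = 4 * β ^ 3 + 12 * β ^ 4 := by rw [hη4]; ring
    nlinarith [mul_le_mul_of_nonneg_left hβ32 (by positivity : (0:ℝ) ≤ 12 * β ^ 3)]
  have e4 : 32 * β ^ 3 ≤ (1 - Q) * E * (1 - (1 - η) * Q) := by
    have s1 : E * β ≤ E * (1 - (1 - η) * Q) := mul_le_mul_of_nonneg_left hden_lb hE0.le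
    have s2 : β * (E * β) ≤ (1 - Q) * (E * (1 - (1 - η) * Q)) :=
      mul_le_mul hd1 s1 (by positivity) (by linarith)
    have s3 : β * (E * β) = 32 * β ^ 3 := by rw [hE32]; ring
    have s4 : (1 - Q) * (E * (1 - (1 - η) * Q)) = (1 - Q) * E * (1 - (1 - η) * Q) := by
      ring
    linarith
  linarith [hid, e2, e3, e4]

set_option maxHeartbeats 1000000 in
lemma caseB_other_M2 (A C Q E β η yi σ rj rk : ℝ)
    (hE0 : 0 < E) (hE1 : E ≤ 1) (hβ : β = E / 32) (hη : η = E * β / 8)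
    (hyi : yi = 0) (hσ : σ = β + η) (hQ0 : 0 ≤ Q)
    (hd1 : β ≤ 1 - Q) (hd2 : 1 - Q ≤ σ)
    (hA1 : -(1 - Q) ≤ A) (hA2 : A ≤ 1 - Q)
    (hC1 : -(2 * σ ^ 2) ≤ C - (β * rj + η * rk)) (hC2 : C - (β * rj + η * rk) ≤ 2 * σ ^ 2)
    (hrj0 : 0 ≤ rj) (hrk1 : -1 ≤ rk) :
    A * (1 - (1 - yi) * Q) ≤ yi * A + (1 - yi) * C + E * (1 - (1 - yi) * Q) := by
  rw [hyi]
  rw [hσ] at hC1 hC2 hd2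
  have hβ0 : 0 < β := by rw [hβ]; positivity
  have hE32 : E = 32 * β := by rw [hβ]; ring
  have hβ32 : β ≤ 1 / 32 := by rw [hβ]; linarith
  have hη4 : η = 4 * β ^ 2 := by rw [hη, hE32]; ring
  have hη0 : 0 < η := by nlinarith
  have hηβ : η ≤ β := by nlinarith
  have hAub : A ≤ β + η := by linarith
  have e1 : A * (1 - Q) ≤ (β + η) * (1 - Q) :=
    mul_le_mul_of_nonneg_right hAub (by linarith)
  have hClb : -η - 2 * (β + η) ^ 2 ≤ C := by
    nlinarith [mul_nonneg hβ0.le hrj0,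
      mul_nonneg hη0.le (by linarith : (0:ℝ) ≤ rk + 1)]
  have s0 : E / 2 ≤ E - β - η := by
    nlinarith [mul_le_mul_of_nonneg_left hE1 hE0.le]
  have s1 : (E / 2) * β ≤ (E / 2) * (1 - Q) := mul_le_mul_of_nonneg_left hd1 (by positivity)
  have s2 : (E / 2) * (1 - Q) ≤ (E - β - η) * (1 - Q) :=
    mul_le_mul_of_nonneg_right s0 (by linarith)
  have e3 : (E / 2) * β = 16 * β ^ 2 := by rw [hE32]; ring
  have e4 : η + 2 * (β + η) ^ 2 ≤ 16 * β ^ 2 := by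
    have h5 : (β + η) ^ 2 ≤ 4 * β ^ 2 := by nlinarith
    linarith [hη4.le, hη4.ge, h5]
  have ering : (E - β - η) * (1 - Q) = E * (1 - Q) - (β + η) * (1 - Q) := by ring
  nlinarith [e1, s1, s2, e3, e4, ering, hClb]

lemma caseB_M3_zero (A C Q E yi : ℝ) (hyi : yi = 0) (hE : 0 ≤ E) :
    C * (1 - (1 - yi) * Q) ≤ (1 - Q) * (yi * A + (1 - yi) * C)
      + (1 - Q) * E * (1 - (1 - yi) * Q) := by
  subst hyi
  nlinarith [mul_nonneg hE (sq_nonneg (1 - Q))]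

/-- abbreviations for the two stage values -/
def stageVA (r : Finset (Fin N) → Fin N → ℝ) (y : Fin N → ℝ) (i : Fin N) : ℝ :=
  stageV r i (Function.update y i 1)

def stageVC (r : Finset (Fin N) → Fin N → ℝ) (y : Fin N → ℝ) (i : Fin N) : ℝ :=
  stageV r i (Function.update y i 0)

end QG

set_option maxHeartbeats 2000000 in
/-- **If the set of normal players is nonempty (ordered to be `{0,…,n-1}`) and the
problem `LCP(R̂,0)` has a solution with `z_0 < 1`, then the quitting game admits a
stationary `ε`-equilibrium, for every `ε > 0`.** -/
theorem quitting_game_stationary_equilibrium_of_nontrivial_LCP_solution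
    (N n : ℕ) (hN : 1 ≤ N) (hn : 1 ≤ n) (hnN : n ≤ N)
    (r : Finset (Fin N) → Fin N → ℝ)
    (hr : ∀ S i, r S i ∈ Set.Icc (-1 : ℝ) 1)
    (hdiag : ∀ i : Fin N, r {i} i = 0)
    (hIstar : normalPlayers r = {i : Fin N | (i : ℕ) < n})
    (hsol : ∃ (w : Fin n → ℝ) (z : Fin (n + 1) → ℝ),
        IsLCPSolution n (fun i j => r {Fin.castLE hnN i} (Fin.castLE hnN j)) 0 w z ∧
          z 0 < 1)
    (ε : ℝ) (hε : 0 < ε) :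
    ∃ x : Fin N → ℕ → ℝ, (∀ i t, x i t = x i 0) ∧ IsEpsEquilibrium r x ε := by
  classical
  obtain ⟨w, zv, ⟨hw0, hz0, hzsum, hweq, hcomp⟩, hzlt⟩ := hsol
  set ζ : ℝ := 1 - zv 0 with hζ_def
  have hζ : 0 < ζ := by simp only [hζ_def]; linarith
  set ξ : Fin N → ℝ :=
    fun k => if h : (k : ℕ) < n then zv (Fin.succ ⟨(k : ℕ), h⟩) / ζ else 0 with hξ_def
  have hξ0 : ∀ k, 0 ≤ ξ k := by
    intro k; simp only [hξ_def]
    split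
    · exact div_nonneg (hz0 _) hζ.le
    · exact le_refl 0
  have hcastival : ∀ (i : Fin N) (h : (i : ℕ) < n), Fin.castLE hnN ⟨(i : ℕ), h⟩ = i :=
    fun i h => Fin.ext (by simp)
  have hξcast : ∀ m : Fin n, ξ (Fin.castLE hnN m) = zv m.succ / ζ := by
    intro m
    simp only [hξ_def]
    rw [dif_pos (show ((Fin.castLE hnN m : Fin N) : ℕ) < n from by simpa using m.isLt)]
    congr 2
  have hξzero : ∀ k : Fin N, ¬ (k : ℕ) < n → ξ k = 0 := by
    intro k hk; simp only [hξ_def]; rw [dif_neg hk]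
  have hξsum : ∑ k, ξ k = 1 := by
    rw [QG.sum_castLE hnN ξ hξzero, Finset.sum_congr rfl fun m _ => hξcast m,
      ← Finset.sum_div]
    have h1 : ∑ m : Fin n, zv m.succ = ζ := by
      have h2 := Fin.sum_univ_succ zv
      rw [hzsum] at h2
      simp only [hζ_def]; linarith
    rw [h1, div_self (ne_of_gt hζ)]
  have hξ1 : ∀ k, ξ k ≤ 1 := by
    intro k
    have h1 := Finset.single_le_sum (f := ξ) (fun k _ => hξ0 k) (Finset.mem_univ k)
    rw [hξsum] at h1; exact h1
  have hnormal : ∀ k : Fin N, (k : ℕ) < n ↔ k ∈ normalPlayers r := by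
    intro k; rw [hIstar]; simp only [Set.mem_setOf_eq]
  have hξlt : ∀ k : Fin N, 0 < ξ k → (k : ℕ) < n := by
    intro k hk
    by_contra hkn
    rw [hξzero k hkn] at hk
    exact lt_irrefl 0 hk
  set W : Fin N → ℝ := fun i => ∑ k, ξ k * r {k} i with hW_def
  have habs : ∀ S j, |r S j| ≤ 1 := fun S j => abs_le.mpr ⟨(hr S j).1, (hr S j).2⟩
  have hWnormal : ∀ (i : Fin N) (h : (i : ℕ) < n), W i = w ⟨(i : ℕ), h⟩ / ζ := by
    intro i h
    simp only [hW_def]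
    rw [QG.sum_castLE hnN (fun k => ξ k * r {k} i)
      (fun k hk => by show ξ k * r {k} i = 0; rw [hξzero k hk, zero_mul])]
    have h2 := hweq ⟨(i : ℕ), h⟩
    simp only [Pi.zero_apply, mul_zero, zero_add] at h2
    rw [hcastival i h] at h2
    rw [h2, Finset.sum_div]
    apply Finset.sum_congr rfl
    intro m _
    simp only [hξcast m]
    ring
  have hW0 : ∀ i, 0 ≤ W i := by
    intro i
    by_cases h : (i : ℕ) < n
    · rw [hWnormal i h]; exact div_nonneg (hw0 _) hζ.le
    · simp only [hW_def]
      apply Finset.sum_nonneg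
      intro k _
      rcases eq_or_lt_of_le (hξ0 k) with hk | hk
      · rw [← hk, zero_mul]
      · have hkn : (k : ℕ) < n := hξlt k hk
        have hkP : k ∈ normalPlayers r := (hnormal k).mp hkn
        have hiP : i ∉ normalPlayers r := fun hc => h ((hnormal i).mpr hc)
        have hki : k ≠ i := fun hc => h (hc ▸ hkn)
        exact mul_nonneg hk.le (QG.nonnormal_pos hiP hkP hki).le
  have hWc : ∀ i, 0 < ξ i → W i = 0 := by
    intro i hpos
    have h : (i : ℕ) < n := hξlt i hpos
    rw [hWnormal i h]
    rcases hcomp ⟨(i : ℕ), h⟩ with hcz | hcw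
    · exfalso
      have h2 : ξ i = zv (⟨(i : ℕ), h⟩ : Fin n).succ / ζ := by
        have h3 := hξcast ⟨(i : ℕ), h⟩
        rwa [hcastival i h] at h3
      rw [h2, hcz, zero_div] at hpos
      exact lt_irrefl 0 hpos
    · rw [hcw, zero_div]
  -- a player who quits with positive probability
  have hsumne : ∑ k, ξ k ≠ 0 := by rw [hξsum]; norm_num
  obtain ⟨j₀, -, hj₀⟩ := Finset.exists_ne_zero_of_sum_ne_zero hsumne
  have hj₀pos : 0 < ξ j₀ := lt_of_le_of_ne (hξ0 j₀) (Ne.symm hj₀)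
  -- reduce ε to E := min ε 1
  set E := min ε 1 with hE_def
  have hE0 : 0 < E := lt_min hε one_pos
  have hE1 : E ≤ 1 := min_le_right _ _
  have hEε : E ≤ ε := min_le_left _ _
  suffices hsuf : ∃ x : Fin N → ℕ → ℝ, (∀ i t, x i t = x i 0) ∧ IsEpsEquilibrium r x E by
    obtain ⟨x, hst, hcon, heq⟩ := hsuf
    exact ⟨x, hst, hcon, fun i x' hx' => by linarith [heq i x' hx']⟩
  by_cases hbig : ∃ k₀, k₀ ≠ j₀ ∧ 0 < ξ k₀
  · -- CASE A : at least two players quit with positive probability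
    obtain ⟨k₀, hk₀ne, hk₀pos⟩ := hbig
    set μ := min (ξ j₀) (ξ k₀) with hμ_def
    have hμ0 : 0 < μ := lt_min hj₀pos hk₀pos
    have hμ1 : μ ≤ 1 := le_trans (min_le_left _ _) (hξ1 j₀)
    set δ := min (1 / 2) (E * μ ^ 2 / 12) with hδ_def
    have hδ0 : 0 < δ := lt_min (by norm_num) (by positivity)
    have hδhalf : δ ≤ 1 / 2 := min_le_left _ _
    have hδE : δ ≤ E * μ ^ 2 / 12 := min_le_right _ _
    set y : Fin N → ℝ := fun k => δ * ξ k with hy_def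
    have hy : ∀ k, 0 ≤ y k ∧ y k ≤ 1 := by
      intro k
      constructor
      · exact mul_nonneg hδ0.le (hξ0 k)
      · simp only [hy_def]; nlinarith [hξ1 k, hξ0 k]
    -- per-player facts
    have key : ∀ i : Fin N,
        δ * μ ≤ 1 - QG.QQ y i ∧ 1 - QG.QQ y i ≤ δ ∧ 0 ≤ QG.QQ y i ∧
        |QG.stageV r i (Function.update y i 1)| ≤ 1 - QG.QQ y i ∧
        |QG.stageV r i (Function.update y i 0) - δ * W i| ≤ 2 * δ ^ 2 := by
      intro i
      have hwit : ∃ j₁, j₁ ≠ i ∧ μ ≤ ξ j₁ := by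
        by_cases hij : i = j₀
        · exact ⟨k₀, by rw [hij]; exact hk₀ne, min_le_right _ _⟩
        · exact ⟨j₀, fun hc => hij hc.symm, min_le_left _ _⟩
      obtain ⟨j₁, hj₁ne, hj₁μ⟩ := hwit
      have hd1 : δ * μ ≤ 1 - QG.QQ y i := by
        have h1 := QG.single_le_d hy hj₁ne
        have h2 : δ * μ ≤ y j₁ := by
          simp only [hy_def]
          exact mul_le_mul_of_nonneg_left hj₁μ hδ0.le
        linarith
      have hσδ : ∑ k ∈ Finset.univ.erase i, y k ≤ δ := by
        have h1 : ∑ k ∈ Finset.univ.erase i, y k ≤ ∑ k, y k :=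
          Finset.sum_le_sum_of_subset_of_nonneg (Finset.erase_subset _ _)
            (fun k _ _ => (hy k).1)
        have h2 : ∑ k, y k = δ := by
          simp only [hy_def]; rw [← Finset.mul_sum, hξsum, mul_one]
        linarith
      have hd2 : 1 - QG.QQ y i ≤ δ := le_trans (QG.d_le_sigma hy i) hσδ
      have hQ0 : 0 ≤ QG.QQ y i := QG.QQ_nonneg hy i
      have hA : |QG.stageV r i (Function.update y i 1)| ≤ 1 - QG.QQ y i :=
        QG.stageV_quit_bound r habs i (hdiag i) y hy
      have hCa := QG.stageV_approx r habs i (Function.update y i 0)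
        (QG.update_mem y hy i le_rfl zero_le_one)
      rw [QG.sum_update_zero_mul, QG.sum_update_zero] at hCa
      have hWy : ∑ k ∈ Finset.univ.erase i, y k * r {k} i = δ * W i := by
        have h3 := Finset.sum_erase_add Finset.univ (fun k => y k * r {k} i)
          (Finset.mem_univ i)
        simp only [hdiag i, mul_zero, add_zero] at h3
        have h4 : ∑ k, y k * r {k} i = δ * W i := by
          simp only [hW_def, hy_def, Finset.mul_sum]
          exact Finset.sum_congr rfl fun k _ => by ring
        rw [h3, h4]
      rw [hWy] at hCa
      have hσnn : 0 ≤ ∑ k ∈ Finset.univ.erase i, y k :=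
        Finset.sum_nonneg fun k _ => (hy k).1
      have hC : |QG.stageV r i (Function.update y i 0) - δ * W i| ≤ 2 * δ ^ 2 := by
        calc |QG.stageV r i (Function.update y i 0) - δ * W i|
            ≤ 2 * (∑ k ∈ Finset.univ.erase i, y k) ^ 2 := hCa
          _ ≤ 2 * δ ^ 2 := by nlinarith
      exact ⟨hd1, hd2, hQ0, hA, hC⟩
    refine ⟨fun j _ => y j, fun i t => rfl, QG.master r habs E hE0 y hy ?_ ?_ ?_⟩
    · -- the continuation probability is < 1
      intro i
      obtain ⟨hd1, -, -, -, -⟩ := key i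
      have hpos := mul_pos hδ0 hμ0
      linarith
    · -- no incentive to quit
      intro i
      obtain ⟨hd1, hd2, hQ0, hA, hC⟩ := key i
      obtain ⟨hA1, hA2⟩ := abs_le.mp hA
      obtain ⟨hC1, hC2⟩ := abs_le.mp hC
      have hyi0 := (hy i).1
      have hyiδ : y i ≤ δ := by
        simp only [hy_def]; nlinarith [hξ1 i, hξ0 i]
      exact QG.caseA_M2 _ _ _ _ _ _ _ _ hd1 hd2 (by linarith) (by linarith)
        (by linarith) (hW0 i) hyi0 hyiδ hδ0 hδhalf hδE hμ0 hμ1 hE0 hE1 hQ0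
    ·
      intro i
      obtain ⟨hd1, hd2, hQ0, hA, hC⟩ := key i
      obtain ⟨hA1, hA2⟩ := abs_le.mp hA
      obtain ⟨hC1, hC2⟩ := abs_le.mp hC
      have hyi0 := (hy i).1
      have hyiδ : y i ≤ δ := by
        simp only [hy_def]; nlinarith [hξ1 i, hξ0 i]
      have hcase : y i = 0 ∨ W i = 0 := by
        rcases eq_or_lt_of_le (hξ0 i) with hxi | hxi
        · left; simp only [hy_def]; rw [← hxi, mul_zero]
        · right; exact hWc i hxi
      exact QG.caseA_M3 _ _ _ _ _ _ _ _ hd1 hd2 (by linarith) (by linarith)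
        (by linarith) hyi0 hyiδ hδ0 hδhalf hδE hμ0 hμ1 hE0 hE1 hQ0 hcase
  · -- CASE B : a single player quits; use a punisher
    push_neg at hbig
    have hξz : ∀ k, k ≠ j₀ → ξ k = 0 := fun k hk => le_antisymm (hbig k hk) (hξ0 k)
    have hsingle : ∑ k, ξ k = ξ j₀ :=
      Finset.sum_eq_single j₀ (fun k _ hk => hξz k hk)
        (fun h => absurd (Finset.mem_univ j₀) h)
    have hξj₀ : ξ j₀ = 1 := by rw [← hsingle]; exact hξsum
    have hWr : ∀ i, W i = r {j₀} i := by
      intro i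
      simp only [hW_def]
      rw [Finset.sum_eq_single j₀ (fun k _ hk => by rw [hξz k hk, zero_mul])
        (fun h => absurd (Finset.mem_univ j₀) h), hξj₀, one_mul]
    have hrj₀ : ∀ i, 0 ≤ r {j₀} i := fun i => (hWr i) ▸ hW0 i
    have hj₀P : j₀ ∈ normalPlayers r := (hnormal j₀).mp (hξlt j₀ hj₀pos)
    obtain ⟨k₁, hk₁P, hk₁ne, hk₁r⟩ := QG.exists_punisher hj₀P
    set β := E / 32 with hβ_def
    have hβ0 : 0 < β := by rw [hβ_def]; positivity
    set η := E * β / 8 with hη_def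
    have hη0 : 0 < η := by rw [hη_def]; positivity
    have hβ1 : β ≤ 1 / 32 := by rw [hβ_def]; linarith
    have hηβ : η ≤ β / 8 := by
      rw [hη_def]
      nlinarith
    set y : Fin N → ℝ :=
      fun l => (if l = j₀ then β else 0) + (if l = k₁ then η else 0) with hy_def
    have hy : ∀ k, 0 ≤ y k ∧ y k ≤ 1 := by
      intro k
      simp only [hy_def]
      constructor <;> split_ifs <;> linarith
    have hyj₀ : y j₀ = β := by
      simp only [hy_def]
      rw [if_neg (show ¬ (j₀ = k₁) from fun h => hk₁ne h.symm)]
      simp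
    have hyk₁ : y k₁ = η := by
      simp only [hy_def]
      rw [if_neg hk₁ne]
      simp
    have hyo : ∀ l, l ≠ j₀ → l ≠ k₁ → y l = 0 := by
      intro l h1 h2
      simp only [hy_def]
      rw [if_neg h1, if_neg h2, add_zero]
    have hysum : ∑ k, y k = β + η := by
      simp only [hy_def]
      rw [Finset.sum_add_distrib, Finset.sum_ite_eq' Finset.univ j₀ (fun _ => β),
        Finset.sum_ite_eq' Finset.univ k₁ (fun _ => η),
        if_pos (Finset.mem_univ _), if_pos (Finset.mem_univ _)]
    have hWysum : ∀ i, ∑ k, y k * r {k} i = β * r {j₀} i + η * r {k₁} i := by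
      intro i
      have h : ∀ k, y k * r {k} i
          = (if k = j₀ then β * r {k} i else 0) + (if k = k₁ then η * r {k} i else 0) := by
        intro k
        simp only [hy_def]
        split_ifs <;> ring
      rw [Finset.sum_congr rfl fun k _ => h k, Finset.sum_add_distrib,
        Finset.sum_ite_eq' Finset.univ j₀ (fun k => β * r {k} i),
        Finset.sum_ite_eq' Finset.univ k₁ (fun k => η * r {k} i),
        if_pos (Finset.mem_univ _), if_pos (Finset.mem_univ _)]
    have hWy : ∀ i, ∑ k ∈ Finset.univ.erase i, y k * r {k} i
        = β * r {j₀} i + η * r {k₁} i := by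
      intro i
      have h3 := Finset.sum_erase_add Finset.univ (fun k => y k * r {k} i)
        (Finset.mem_univ i)
      simp only [hdiag i, mul_zero, add_zero] at h3
      rw [h3, hWysum i]
    have hσ : ∀ i, ∑ k ∈ Finset.univ.erase i, y k = (β + η) - y i := by
      intro i
      have h3 := Finset.sum_erase_add Finset.univ y (Finset.mem_univ i)
      rw [hysum] at h3
      linarith
    have key : ∀ i : Fin N,
        0 ≤ QG.QQ y i ∧
        1 - QG.QQ y i ≤ (β + η) - y i ∧
        |QG.stageV r i (Function.update y i 1)| ≤ 1 - QG.QQ y i ∧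
        |QG.stageV r i (Function.update y i 0) - (β * r {j₀} i + η * r {k₁} i)|
          ≤ 2 * ((β + η) - y i) ^ 2 := by
      intro i
      have hQ0 := QG.QQ_nonneg hy i
      have hd2 : 1 - QG.QQ y i ≤ (β + η) - y i := by
        have h1 := QG.d_le_sigma hy i
        rw [hσ i] at h1
        exact h1
      have hA := QG.stageV_quit_bound r habs i (hdiag i) y hy
      have hCa := QG.stageV_approx r habs i (Function.update y i 0)
        (QG.update_mem y hy i le_rfl zero_le_one)
      rw [QG.sum_update_zero_mul, QG.sum_update_zero, hWy i, hσ i] at hCa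
      exact ⟨hQ0, hd2, hA, hCa⟩
    have hdlow : ∀ i : Fin N,
        (i = j₀ → η ≤ 1 - QG.QQ y i) ∧ (i ≠ j₀ → β ≤ 1 - QG.QQ y i) := by
      intro i
      constructor
      · intro hij
        subst hij
        have h1 := QG.single_le_d hy hk₁ne
        rw [hyk₁] at h1
        exact h1
      · intro hij
        have h1 := QG.single_le_d hy (show j₀ ≠ i from fun hc => hij hc.symm)
        rw [hyj₀] at h1
        exact h1
    refine ⟨fun j _ => y j, fun i t => rfl, QG.master r habs E hE0 y hy ?_ ?_ ?_⟩
    · intro i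
      obtain ⟨h1, h2⟩ := hdlow i
      by_cases hij : i = j₀
      · linarith [h1 hij]
      · linarith [h2 hij]
    · -- no incentive to quit
      intro i
      obtain ⟨hQ0, hd2, hA, hC⟩ := key i
      obtain ⟨hA1, hA2⟩ := abs_le.mp hA
      obtain ⟨hC1, hC2⟩ := abs_le.mp hC
      obtain ⟨hdj, hdo⟩ := hdlow i
      by_cases hij : i = j₀
      · subst hij
        simp only [hdiag i, mul_zero, zero_add] at hC1 hC2
        exact QG.caseB_j0_M2 _ _ _ E β η _ _ (r {k₁} i) hE0 hE1 hβ_def hη_def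
          hyj₀ (by rw [hyj₀]; ring) hQ0 (hdj rfl) hd2 hA1 hA2 hC1 hC2
          (hr _ _).1 hk₁r
      · by_cases hik : i = k₁
        · subst hik
          simp only [hdiag i, mul_zero, add_zero] at hC1 hC2
          exact QG.caseB_k1_M2 _ _ _ E β η _ _ (r {j₀} i) hE0 hE1 hβ_def hη_def
            hyk₁ (by rw [hyk₁]; ring) hQ0 (hdo hij) hd2 hA1 hA2 hC1 hC2
            (hrj₀ i) (hr _ _).2
        · exact QG.caseB_other_M2 _ _ _ E β η _ _ (r {j₀} i) (r {k₁} i) hE0 hE1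
            hβ_def hη_def (hyo i hij hik) (by rw [hyo i hij hik]; ring) hQ0
            (hdo hij) hd2 hA1 hA2 hC1 hC2 (hrj₀ i) (hr _ _).1
    ·
      intro i
      obtain ⟨hQ0, hd2, hA, hC⟩ := key i
      obtain ⟨hA1, hA2⟩ := abs_le.mp hA
      obtain ⟨hC1, hC2⟩ := abs_le.mp hC
      obtain ⟨hdj, hdo⟩ := hdlow i
      by_cases hij : i = j₀
      · subst hij
        simp only [hdiag i, mul_zero, zero_add] at hC1 hC2
        exact QG.caseB_j0_M3 _ _ _ E β η _ _ (r {k₁} i) hE0 hE1 hβ_def hη_def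
          hyj₀ (by rw [hyj₀]; ring) hQ0 (hdj rfl) hd2 hA1 hA2 hC1 hC2
          (hr _ _).1 hk₁r
      · by_cases hik : i = k₁
        · subst hik
          simp only [hdiag i, mul_zero, add_zero] at hC1 hC2
          exact QG.caseB_k1_M3 _ _ _ E β η _ _ (r {j₀} i) hE0 hE1 hβ_def hη_def
            hyk₁ (by rw [hyk₁]; ring) hQ0 (hdo hij) hd2 hA1 hA2 hC1 hC2
            (hrj₀ i) (hr _ _).2
        · exact QG.caseB_M3_zero _ _ _ E (y i) (hyo i hij hik) hE0.le

end
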